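/- arXiv:0807.0862 — 2 statements merged into one kernel-verified Lean document; each statement's English description precedes it below -/
import Mathlib

section
/- For any nonzero integer m with |m| ≤ n (n ≥ 2), there exists a prime p ≤ C · log n (for an absolute constant C) such that p does not divide m. -/
open Finset Nat

private theorem my_centralBinom_le {n : ℕ} (n_pos : 0 < n) :
    Nat.centralBinom n ≤ (2 * n) ^ Nat.sqrt (2 * n) * primorial (2 * n) := by
  have n2_pos : 1 ≤ 2 * n := by omega
  let S := (Finset.range (2 * n + 1)).filter Nat.Prime
  let f := fun x => x ^ n.centralBinom.factorization x
  have hS : ∏ x ∈ S, f x = Nat.centralBinom n := by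
    rw [Finset.prod_filter_of_ne fun p _ h => ?_, Nat.prod_pow_factorization_centralBinom]
    by_contra hp
    apply h
    show p ^ n.centralBinom.factorization p = 1
    rw [Nat.factorization_eq_zero_of_not_prime n.centralBinom hp, _root_.pow_zero]
  rw [← hS, ← Finset.prod_filter_mul_prod_filter_not S (· ≤ Nat.sqrt (2 * n))]
  apply Nat.mul_le_mul
  · refine (Finset.prod_le_prod' fun p _ => (?_ : f p ≤ 2 * n)).trans ?_
    · exact Nat.pow_factorization_choose_le (by omega)
    have hc : (Finset.Icc 1 (Nat.sqrt (2 * n))).card = Nat.sqrt (2 * n) := by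
      rw [Nat.card_Icc, Nat.add_sub_cancel]
    rw [Finset.prod_const]
    refine pow_right_mono₀ n2_pos ((Finset.card_le_card fun x hx => ?_).trans hc.le)
    obtain ⟨h1, h2⟩ := Finset.mem_filter.1 hx
    exact Finset.mem_Icc.mpr ⟨(Finset.mem_filter.1 h1).2.one_lt.le, h2⟩
  · refine (Finset.prod_le_prod' fun p hp => (?_ : f p ≤ p)).trans ?_
    · obtain ⟨h1, h2⟩ := Finset.mem_filter.1 hp
      refine (pow_right_mono₀ (Finset.mem_filter.1 h1).2.one_lt.le ?_).trans (pow_one p).le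
      exact Nat.factorization_choose_le_one (Nat.sqrt_lt'.mp <| not_le.1 h2)
    refine Finset.prod_le_prod_of_subset_of_one_le' (Finset.filter_subset _ _) ?_
    exact fun p hp _ => (Finset.mem_filter.1 hp).2.one_lt.le

private theorem primorial_nat_bound {n : ℕ} (hn : 4 ≤ n) :
    4 ^ n ≤ (2 * n) ^ (Nat.sqrt (2 * n) + 1) * primorial (2 * n) := by
  have h2 := Nat.four_pow_lt_mul_centralBinom n hn
  have h3 := my_centralBinom_le (show 0 < n by omega)
  calc 4 ^ n ≤ n * Nat.centralBinom n := h2.le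
    _ ≤ n * ((2 * n) ^ Nat.sqrt (2 * n) * primorial (2 * n)) :=
        Nat.mul_le_mul_left _ h3
    _ ≤ (2 * n) * ((2 * n) ^ Nat.sqrt (2 * n) * primorial (2 * n)) :=
        Nat.mul_le_mul_right _ (by omega)
    _ = (2 * n) ^ (Nat.sqrt (2 * n) + 1) * primorial (2 * n) := by ring

private theorem log_le_four_sqrt_sqrt {x : ℝ} (hx : 1 ≤ x) :
    Real.log x ≤ 4 * Real.sqrt (Real.sqrt x) := by
  have h0 : (0 : ℝ) < x := by linarith
  set t := Real.sqrt (Real.sqrt x) with ht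
  have ht1 : 1 ≤ t := Real.one_le_sqrt.2 (Real.one_le_sqrt.2 hx)
  have hts : t ^ 4 = x := by
    rw [show 4 = 2 * 2 from rfl, pow_mul, Real.sq_sqrt (Real.sqrt_nonneg x),
      Real.sq_sqrt h0.le]
  have h1 : Real.log x = 4 * Real.log t := by
    rw [← hts, Real.log_pow]; norm_num
  have h2 := Real.log_le_sub_one_of_pos (show (0:ℝ) < t by linarith)
  rw [h1]; linarith

private theorem key_ineq {n : ℕ} (hn : 65536 ≤ n) :
    ((Nat.sqrt (2 * n) : ℝ) + 1) * Real.log (2 * n) ≤ n * Real.log 2 := by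
  have hn1 : (65536 : ℝ) ≤ n := by exact_mod_cast hn
  set a := Real.sqrt n with hadef
  set b := Real.sqrt a with hbdef
  have ha0 : 0 ≤ a := Real.sqrt_nonneg _
  have hb0 : 0 ≤ b := Real.sqrt_nonneg _
  have hna : (n : ℝ) = a ^ 2 := by rw [hadef, Real.sq_sqrt (by linarith)]
  have hab : a = b ^ 2 := by rw [hbdef, Real.sq_sqrt ha0]
  have ha : 256 ≤ a := by
    have := Real.sqrt_le_sqrt hn1
    rwa [show Real.sqrt 65536 = 256 by
      rw [show (65536:ℝ) = 256 ^ 2 by norm_num, Real.sqrt_sq (by norm_num)]] at this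
  have hb : 16 ≤ b := by
    have := Real.sqrt_le_sqrt ha
    rwa [show Real.sqrt 256 = 16 by
      rw [show (256:ℝ) = 16 ^ 2 by norm_num, Real.sqrt_sq (by norm_num)]] at this
  -- bound the sqrt factor
  have hs1 : (Nat.sqrt (2 * n) : ℝ) ≤ Real.sqrt (2 * n) := by
    have := Real.nat_sqrt_le_real_sqrt (a := 2 * n)
    rwa [Nat.cast_mul, Nat.cast_ofNat] at this
  have hsqrt2 : Real.sqrt 2 ≤ 3 / 2 := by
    rw [show (3/2 : ℝ) = Real.sqrt ((3/2) ^ 2) by rw [Real.sqrt_sq]; norm_num]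
    exact Real.sqrt_le_sqrt (by norm_num)
  have hs2 : Real.sqrt (2 * n) ≤ (3 / 2) * a := by
    rw [Real.sqrt_mul (by norm_num : (0:ℝ) ≤ 2)]
    exact mul_le_mul hsqrt2 le_rfl ha0 (by norm_num)
  have hsum : (Nat.sqrt (2 * n) : ℝ) + 1 ≤ 2 * a := by linarith
  -- bound the log factor
  have hlogn : Real.log n ≤ 4 * b := by
    have := log_le_four_sqrt_sqrt (x := n) (by linarith)
    rwa [← hadef, ← hbdef] at this
  have hlog2 : Real.log 2 ≤ 1 := by
    have := Real.log_le_sub_one_of_pos (show (0:ℝ) < 2 by norm_num); linarith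
  have hlog2n : Real.log (2 * n) ≤ 5 * b := by
    rw [Real.log_mul (by norm_num) (by positivity)]
    linarith
  have hlogpos : 0 ≤ Real.log (2 * n) := Real.log_nonneg (by linarith)
  have hmain : ((Nat.sqrt (2 * n) : ℝ) + 1) * Real.log (2 * n) ≤ 2 * a * (5 * b) :=
    mul_le_mul hsum hlog2n hlogpos (by linarith)
  have hl2 : (0.6931471803 : ℝ) < Real.log 2 := Real.log_two_gt_d9
  -- n * log 2 = a * b^2 * log 2 and 10 ≤ b * log 2
  have : 2 * a * (5 * b) ≤ n * Real.log 2 := by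
    rw [hna, hab]
    nlinarith [mul_nonneg ha0 hb0]
  linarith

private theorem two_pow_le_primorial {n : ℕ} (hn : 65536 ≤ n) :
    (2 : ℝ) ^ n ≤ (primorial (2 * n) : ℝ) := by
  have h1 := primorial_nat_bound (show 4 ≤ n by omega)
  have h1R : (4 : ℝ) ^ n ≤ ((2 * n : ℕ) : ℝ) ^ (Nat.sqrt (2 * n) + 1) *
      (primorial (2 * n) : ℝ) := by exact_mod_cast h1
  have hpos : (0 : ℝ) < ((2 * n : ℕ) : ℝ) := by positivity
  have h2 : ((2 * n : ℕ) : ℝ) ^ (Nat.sqrt (2 * n) + 1) ≤ 2 ^ n := by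
    rw [← Real.exp_log (pow_pos hpos _), ← Real.exp_log (pow_pos two_pos n)]
    apply Real.exp_le_exp.mpr
    rw [Real.log_pow, Real.log_pow]
    have := key_ineq hn
    have hcast : Real.log ((2 * n : ℕ) : ℝ) = Real.log (2 * (n : ℝ)) := by push_cast; ring_nf
    rw [hcast]
    push_cast
    convert this using 2
  have h3 : (2 : ℝ) ^ n * (2 : ℝ) ^ n ≤ 2 ^ n * (primorial (2 * n) : ℝ) := by
    calc (2 : ℝ) ^ n * 2 ^ n = 4 ^ n := by rw [← mul_pow]; norm_num
      _ ≤ ((2 * n : ℕ) : ℝ) ^ (Nat.sqrt (2 * n) + 1) * (primorial (2 * n) : ℝ) := h1R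
      _ ≤ 2 ^ n * (primorial (2 * n) : ℝ) := by
          apply mul_le_mul_of_nonneg_right h2 (by positivity)
  exact le_of_mul_le_mul_left h3 (by positivity)

private theorem my_primorial_mono {m n : ℕ} (h : m ≤ n) :
    primorial m ≤ primorial n := by
  unfold _root_.primorial
  refine Finset.prod_le_prod_of_subset_of_one_le'
    (Finset.filter_subset_filter _ (Finset.range_subset_range.2 (by omega))) ?_
  exact fun p hp _ => (Finset.mem_filter.1 hp).2.one_lt.le

/-- For any nonzero integer `m` with `|m| ≤ n` (`n ≥ 2`) there is a prime
`p ≤ C · log n` not dividing `m`, for an absolute constant `C`. -/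
theorem grig_stmt5 :
    ∃ C : ℝ, 0 < C ∧ ∀ (n : ℕ) (m : ℤ), 2 ≤ n → m ≠ 0 → m.natAbs ≤ n →
      ∃ p : ℕ, p.Prime ∧ (p : ℝ) ≤ C * Real.log n ∧ ¬ ((p : ℤ) ∣ m) := by
  refine ⟨2097152, by norm_num, ?_⟩
  intro n m hn hm hmn
  have hn2 : (2 : ℝ) ≤ (n : ℝ) := by exact_mod_cast hn
  have hl2 : (0.6931471803 : ℝ) < Real.log 2 := Real.log_two_gt_d9
  have hlog : Real.log 2 ≤ Real.log n := Real.log_le_log (by norm_num) hn2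
  have hLpos : 0 < Real.log n := by linarith
  set X := Nat.floor (2097152 * Real.log n) with hXdef
  have hXge : 2 * 65536 ≤ X := by
    apply Nat.le_floor
    push_cast
    nlinarith
  by_contra hcon
  push_neg at hcon
  have hdvd : primorial X ∣ m.natAbs := by
    unfold _root_.primorial
    apply Finset.prod_primes_dvd
    · intro p hp
      exact (Finset.mem_filter.1 hp).2.prime
    · intro p hp
      obtain ⟨hpr, hprime⟩ := Finset.mem_filter.1 hp
      have hple : p ≤ X := Nat.lt_succ_iff.1 (Finset.mem_range.1 hpr)
      have hpR : (p : ℝ) ≤ 2097152 * Real.log n :=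
        le_trans (Nat.cast_le.2 hple) (Nat.floor_le (by positivity))
      have hd : (p : ℤ) ∣ m := hcon p hprime hpR
      rw [← Int.natCast_dvd_natCast]
      exact Int.dvd_natAbs.mpr hd
  have hle : primorial X ≤ n :=
    le_trans (Nat.le_of_dvd (Int.natAbs_pos.2 hm) hdvd) hmn
  -- contradiction: n < primorial X
  set k := X / 2 with hkdef
  have hk : 65536 ≤ k := by omega
  have h2k : 2 * k ≤ X := by omega
  have hP : (2 : ℝ) ^ k ≤ (primorial X : ℝ) :=
    le_trans (two_pow_le_primorial hk) (Nat.cast_le.2 (my_primorial_mono h2k))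
  have hXf : 2097152 * Real.log n - 1 < (X : ℝ) := Nat.sub_one_lt_floor _
  have hkX : (X : ℝ) ≤ 2 * (k : ℝ) + 1 := by
    have : X ≤ 2 * k + 1 := by omega
    exact_mod_cast this
  have hnk : (n : ℝ) < 2 ^ k := by
    rw [← Real.exp_log (show (0 : ℝ) < n by linarith),
      ← Real.exp_log (show (0 : ℝ) < (2:ℝ) ^ k by positivity)]
    apply Real.exp_lt_exp.mpr
    rw [Real.log_pow]
    have hk1 : 1048576 * Real.log n - 1 ≤ (k : ℝ) := by linarith
    have hk2 : (1048576 * Real.log n - 1) * Real.log 2 ≤ (k : ℝ) * Real.log 2 :=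
      mul_le_mul_of_nonneg_right hk1 (by linarith)
    nlinarith [mul_lt_mul_of_pos_left hl2 hLpos]
  have hcontra : (n : ℝ) < (primorial X : ℝ) := lt_of_lt_of_le hnk hP
  exact absurd (Nat.cast_le.2 hle) (not_le.2 hcontra)
end

section
/- Let G be a finitely generated group with generating set S that is not nilpotent. Then for every n ≥ 1 there exists a nontrivial element g ∈ G with word length ||g||_S ≤ C·2^n (C an absolute constant depending on S) such that g lies in the n-th term Γ_n(G) of the lower central series; consequently every finite nilpotent quotient of G in which g is nontrivial has nilpotency class at least n, hence order at least 2^n. -/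
/-- `g` has word length at most `n` with respect to the generating set `S`. -/
def wordLenLE {G : Type*} [Group G] (S : Set G) (n : ℕ) (g : G) : Prop :=
  ∃ l : List G, l.length ≤ n ∧ (∀ x ∈ l, x ∈ S ∨ x⁻¹ ∈ S) ∧ l.prod = g

open scoped commutatorElement

/-- iterated commutators of elements of `S` of depth `k+1`. -/
def iterComm {G : Type*} [Group G] (S : Set G) : ℕ → Set G
  | 0 => S
  | (k + 1) => {x | ∃ t ∈ iterComm S k, ∃ s ∈ S, x = ⁅t, s⁆}

lemma wordLenLE_mono {G : Type*} [Group G] {S : Set G} {m m' : ℕ} {g : G}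
    (h : wordLenLE S m g) (hmm : m ≤ m') : wordLenLE S m' g := by
  obtain ⟨l, h1, h2, h3⟩ := h
  exact ⟨l, h1.trans hmm, h2, h3⟩

lemma wordLenLE_commutator {G : Type*} [Group G] {S : Set G} {a : ℕ} {t s : G}
    (ht : wordLenLE S a t) (hs : s ∈ S) : wordLenLE S (2 * a + 2) ⁅t, s⁆ := by
  obtain ⟨l, h1, h2, h3⟩ := ht
  refine ⟨l ++ [s] ++ (l.map (fun x => x⁻¹)).reverse ++ [s⁻¹], ?_, ?_, ?_⟩
  · simp only [List.length_append, List.length_reverse, List.length_map,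
      List.length_singleton]
    omega
  · intro x hx
    simp only [List.mem_append, List.mem_singleton, List.mem_reverse,
      List.mem_map] at hx
    rcases hx with ((hx | rfl) | ⟨y, hy, rfl⟩) | rfl
    · exact h2 x hx
    · exact Or.inl hs
    · rcases h2 y hy with h | h
      · exact Or.inr (by simpa using h)
      · exact Or.inl h
    · exact Or.inr (by simpa using hs)
  · rw [List.prod_append, List.prod_append, List.prod_append, ← List.prod_inv_reverse,
      h3, List.prod_singleton, List.prod_singleton, commutatorElement_def]

lemma iterComm_wordLen {G : Type*} [Group G] {S : Set G} :
    ∀ k : ℕ, ∀ g ∈ iterComm S k, wordLenLE S (2 ^ (k + 2) - 2) g := by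
  intro k
  induction k with
  | zero =>
    intro g hg
    exact ⟨[g], by norm_num, fun x hx => by simp at hx; subst hx; exact Or.inl hg, by simp⟩
  | succ k ih =>
    rintro g ⟨t, ht, s, hs, rfl⟩
    have := wordLenLE_commutator (ih t ht) hs
    refine wordLenLE_mono this ?_
    have h2 : 2 ≤ 2 ^ (k + 2) := by
      calc (2 : ℕ) = 2 ^ 1 := by norm_num
      _ ≤ 2 ^ (k + 2) := Nat.pow_le_pow_right (by norm_num) (by omega)
    have : 2 ^ (k + 1 + 2) = 2 * 2 ^ (k + 2) := by ring
    omega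

lemma iterComm_normalClosure {G : Type*} [Group G] {S : Set G}
    (hSgen : Subgroup.closure S = ⊤) :
    ∀ k : ℕ, Subgroup.normalClosure (iterComm S k) = (⊤ : Subgroup G).lowerCentralSeries k := by
  intro k
  induction k with
  | zero =>
    apply le_antisymm le_top
    rw [← hSgen]
    exact le_trans Subgroup.closure_le_normalClosure le_rfl
  | succ k ih =>
    have hsucc : (⊤ : Subgroup G).lowerCentralSeries (k + 1) = ⁅(⊤ : Subgroup G).lowerCentralSeries k, ⊤⁆ := rfl
    rw [hsucc, ← ih]
    set Γ := Subgroup.normalClosure (iterComm S k) with hΓ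
    apply le_antisymm
    · apply Subgroup.normalClosure_le_normal
      rintro x ⟨t, ht, s, hs, rfl⟩
      exact Subgroup.commutator_mem_commutator (Subgroup.subset_normalClosure ht)
        (Subgroup.mem_top s)
    · set N := Subgroup.normalClosure (iterComm S (k + 1)) with hN
      set π := QuotientGroup.mk' N with hπ
      have hsurj : Function.Surjective π := QuotientGroup.mk'_surjective N
      have hker : π.ker = N := QuotientGroup.ker_mk' N
      -- each iterated commutator of depth k maps to the center of G ⧸ N
      have hcen : ∀ t ∈ iterComm S k, π t ∈ Subgroup.center (G ⧸ N) := by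
        intro t ht
        have hCt : (⊤ : Subgroup (G ⧸ N)) ≤ Subgroup.centralizer {π t} := by
          have hgen' : Subgroup.closure (π '' S) = ⊤ := by
            rw [← MonoidHom.map_closure, hSgen, Subgroup.map_top_of_surjective _ hsurj]
          rw [← hgen']
          apply Subgroup.closure_le _ |>.mpr
          rintro _ ⟨s, hs, rfl⟩
          rw [SetLike.mem_coe, Subgroup.mem_centralizer_iff]
          rintro m hm
          simp only [Set.mem_singleton_iff] at hm
          subst hm
          have : π ⁅t, s⁆ = 1 :=
            (QuotientGroup.eq_one_iff _).mpr
              (Subgroup.subset_normalClosure ⟨t, ht, s, hs, rfl⟩)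
          rw [map_commutatorElement] at this
          exact (commutatorElement_eq_one_iff_mul_comm.mp this)
        rw [Subgroup.mem_center_iff]
        intro g
        have := hCt (Subgroup.mem_top g)
        rw [Subgroup.mem_centralizer_iff] at this
        exact (this (π t) (Set.mem_singleton _)).symm
      have hmap : Subgroup.map π Γ ≤ Subgroup.center (G ⧸ N) := by
        rw [hΓ, Subgroup.map_normalClosure _ _ hsurj]
        apply Subgroup.normalClosure_le_normal
        rintro _ ⟨t, ht, rfl⟩
        exact hcen t ht
      have hbot : Subgroup.map π ⁅Γ, (⊤ : Subgroup G)⁆ = ⊥ := by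
        rw [Subgroup.map_commutator]
        rw [eq_bot_iff]
        rw [Subgroup.commutator_le]
        intro g1 hg1 g2 _
        have := Subgroup.mem_center_iff.mp (hmap hg1) g2
        rw [Subgroup.mem_bot, commutatorElement_eq_one_iff_mul_comm]
        exact this.symm
      have := (Subgroup.map_eq_bot_iff _).mp hbot
      rwa [hker] at this

lemma chain_card_le {Q : Type*} [Group Q] [Finite Q] {H K : Subgroup Q} (h : H < K) :
    2 * Nat.card H ≤ Nat.card K := by
  have hle : H ≤ K := h.le
  set H' := H.subgroupOf K with hH'
  have hcard : Nat.card H' = Nat.card H :=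
    Nat.card_congr (Subgroup.subgroupOfEquivOfLe hle).toEquiv
  have hne : H' ≠ ⊤ := by
    intro hc
    exact absurd (Subgroup.subgroupOf_eq_top.mp hc) h.not_ge
  have hidx : 2 ≤ H'.index := Subgroup.one_lt_index_of_ne_top hne
  have := H'.index_mul_card
  calc 2 * Nat.card H = 2 * Nat.card H' := by rw [hcard]
    _ ≤ H'.index * Nat.card H' := by
        apply Nat.mul_le_mul_right _ hidx
    _ = Nat.card K := this

/-- If `G` is finitely generated by `S` and not nilpotent, then for every `n ≥ 1`
there is a nontrivial `g ∈ Γ_n(G)` of word length at most `C·2^n`, and any finite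
nilpotent quotient detecting `g` has class at least `n` and order at least `2^n`.
(Here `Γ_n(G)` is `lowerCentralSeries G (n-1)` since Mathlib starts at index 0.) -/
theorem grig_stmt11 {G : Type*} [Group G] (S : Set G) (hSfin : S.Finite)
    (hSgen : Subgroup.closure S = ⊤) (hnotnil : ¬ Group.IsNilpotent G) :
    ∃ C : ℕ, 0 < C ∧ ∀ n : ℕ, 1 ≤ n →
      ∃ g : G, g ≠ 1 ∧ wordLenLE S (C * 2 ^ n) g ∧ g ∈ (⊤ : Subgroup G).lowerCentralSeries (n - 1) ∧
        ∀ (N : Subgroup G) [N.Normal], g ∉ N → Finite (G ⧸ N) →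
          ∀ hnil : Group.IsNilpotent (G ⧸ N),
            n ≤ Group.nilpotencyClass (G ⧸ N) ∧ 2 ^ n ≤ Nat.card (G ⧸ N) := by
  refine ⟨2, by norm_num, ?_⟩
  intro n hn
  -- the lower central series never reaches ⊥
  have hlcs : ∀ k : ℕ, (⊤ : Subgroup G).lowerCentralSeries k ≠ ⊥ := by
    intro k hk
    exact hnotnil (nilpotent_iff_lowerCentralSeries.mpr ⟨k, hk⟩)
  -- find a nontrivial iterated commutator
  have hNC := iterComm_normalClosure (G := G) hSgen (n - 1)
  have hex : ∃ t ∈ iterComm S (n - 1), t ≠ 1 := by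
    by_contra hcon
    push_neg at hcon
    apply hlcs (n - 1)
    rw [← hNC, eq_bot_iff]
    apply Subgroup.normalClosure_le_normal
    intro x hx
    rw [SetLike.mem_coe, Subgroup.mem_bot]
    exact hcon x hx
  obtain ⟨g, hgC, hg1⟩ := hex
  refine ⟨g, hg1, ?_, ?_, ?_⟩
  · -- word length
    have := iterComm_wordLen (n - 1) g hgC
    refine wordLenLE_mono this ?_
    have h1 : n - 1 + 2 = n + 1 := by omega
    rw [h1]
    have : 2 ^ (n + 1) = 2 * 2 ^ n := by ring
    omega
  · rw [← hNC]
    exact Subgroup.subset_normalClosure hgC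
  · -- quotient statement
    intro N hNnorm hgN hfin hnil
    set π := QuotientGroup.mk' N with hπ
    have hker : π.ker = N := QuotientGroup.ker_mk' N
    have hq1 : π g ≠ 1 := by
      intro hc
      exact hgN ((QuotientGroup.eq_one_iff _).mp hc)
    have hqmem : π g ∈ (⊤ : Subgroup (G ⧸ N)).lowerCentralSeries (n - 1) := by
      apply lowerCentralSeries.map π (n - 1)
      rw [← hNC] at *
      exact ⟨g, Subgroup.subset_normalClosure hgC, rfl⟩
    have hQne : ∀ k, k ≤ n - 1 → (⊤ : Subgroup (G ⧸ N)).lowerCentralSeries k ≠ ⊥ := by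
      intro k hk hbot
      have : (⊤ : Subgroup (G ⧸ N)).lowerCentralSeries (n - 1) ≤ (⊤ : Subgroup (G ⧸ N)).lowerCentralSeries k :=
        lowerCentralSeries_antitone _ hk
      rw [hbot] at this
      exact hq1 (Subgroup.mem_bot.mp (this hqmem))
    have hclass : n ≤ Group.nilpotencyClass (G ⧸ N) := by
      by_contra hc
      push_neg at hc
      have hle : Group.nilpotencyClass (G ⧸ N) ≤ n - 1 := by omega
      apply hQne (Group.nilpotencyClass (G ⧸ N)) hle
      exact lowerCentralSeries_nilpotencyClass
    refine ⟨hclass, ?_⟩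
    -- strictness of the chain below n
    have hstrict : ∀ k, k < n →
        (⊤ : Subgroup (G ⧸ N)).lowerCentralSeries (k + 1) < (⊤ : Subgroup (G ⧸ N)).lowerCentralSeries k := by
      intro k hk
      refine lt_of_le_of_ne (lowerCentralSeries_antitone _ (Nat.le_succ k)) ?_
      intro heq
      -- if the series stabilizes at k, it stabilizes forever
      have hstab : ∀ m : ℕ, (⊤ : Subgroup (G ⧸ N)).lowerCentralSeries (k + m) =
          (⊤ : Subgroup (G ⧸ N)).lowerCentralSeries k := by
        intro m
        induction m with
        | zero => rfl
        | succ m ihm =>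
          have : k + (m + 1) = (k + m) + 1 := by omega
          rw [this, lowerCentralSeries_succ, ihm, ← lowerCentralSeries_succ, heq]
      have hkne : (⊤ : Subgroup (G ⧸ N)).lowerCentralSeries k ≠ ⊥ := hQne k (by omega)
      rcases le_or_gt k (Group.nilpotencyClass (G ⧸ N)) with hkc | hkc
      · have := hstab (Group.nilpotencyClass (G ⧸ N) - k)
        rw [Nat.add_sub_cancel' hkc] at this
        rw [lowerCentralSeries_nilpotencyClass] at this
        exact hkne this.symm
      · have : (⊤ : Subgroup (G ⧸ N)).lowerCentralSeries k ≤
            (⊤ : Subgroup (G ⧸ N)).lowerCentralSeries (Group.nilpotencyClass (G ⧸ N)) :=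
          lowerCentralSeries_antitone _ hkc.le
        rw [lowerCentralSeries_nilpotencyClass] at this
        exact hkne (le_bot_iff.mp this)
    -- cardinality bound by induction
    have hcard : ∀ k, k ≤ n →
        2 ^ k * Nat.card ((⊤ : Subgroup (G ⧸ N)).lowerCentralSeries k) ≤ Nat.card (G ⧸ N) := by
      intro k
      induction k with
      | zero =>
        intro _
        simp only [pow_zero, one_mul, lowerCentralSeries_zero]
        rw [Subgroup.card_top]
      | succ k ihk =>
        intro hk
        have h1 := chain_card_le (hstrict k (by omega))
        have h2 := ihk (by omega)
        calc 2 ^ (k + 1) * Nat.card ((⊤ : Subgroup (G ⧸ N)).lowerCentralSeries (k + 1))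
            = 2 ^ k * (2 * Nat.card ((⊤ : Subgroup (G ⧸ N)).lowerCentralSeries (k + 1))) := by ring
          _ ≤ 2 ^ k * Nat.card ((⊤ : Subgroup (G ⧸ N)).lowerCentralSeries k) :=
              Nat.mul_le_mul_left _ h1
          _ ≤ Nat.card (G ⧸ N) := h2
    have hpos : 0 < Nat.card ((⊤ : Subgroup (G ⧸ N)).lowerCentralSeries n) := Nat.card_pos
    calc 2 ^ n = 2 ^ n * 1 := by ring
      _ ≤ 2 ^ n * Nat.card ((⊤ : Subgroup (G ⧸ N)).lowerCentralSeries n) :=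
          Nat.mul_le_mul_left _ hpos
      _ ≤ Nat.card (G ⧸ N) := hcard n le_rfl
end
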